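/- Let L = L(u,v) be a lattice spanned by linearly independent u, v ∈ ℝ² with ‖u‖ = 1 and ‖v‖ = ν ≥ 1, such that ‖x‖ ≥ 1 for every nonzero x ∈ L and ‖x‖ ≥ ν for every x ∈ L not in ℤu. Then for every positive integer n, the set L_n = { αu + βv : α, β ∈ {0,1,…,n} } of (n+1)² points has minimum spanning tree of length exactly (n+1)n + nν. -/

import Mathlib

/-- Points of the Euclidean plane. -/
abbrev Pt := EuclideanSpace ℝ (Fin 2)

open Classical in
/-- Total edge weight of a graph `G` on the points of `S`, w.r.t. the distance function `d`
(each unordered edge counted once). -/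
noncomputable def treeWeight {V : Type*} (d : V → V → ℝ) (S : Finset V)
    (G : SimpleGraph {x // x ∈ S}) : ℝ :=
  (1 / 2) * ∑ x : {x // x ∈ S}, ∑ y : {y // y ∈ S},
    if G.Adj x y then d x.1 y.1 else 0

/-- Length of a minimum spanning tree of the finite set `S`, w.r.t. distance `d`:
the infimum, over all spanning trees of the complete graph on `S` with edge weights given
by `d`, of the total edge weight.  It is `0` if `S` has at most one point. -/
noncomputable def mstLengthF {V : Type*} (d : V → V → ℝ) (S : Finset V) : ℝ :=
  sInf {L : ℝ | ∃ G : SimpleGraph {x // x ∈ S}, G.IsTree ∧ L = treeWeight d S G}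

open Classical in
/-- MST length for a set (`0` junk value for infinite sets). -/
noncomputable def mstLength {V : Type*} (d : V → V → ℝ) (S : Set V) : ℝ :=
  if h : S.Finite then mstLengthF d h.toFinset else 0

/-- The MST-ratio `μ(A,B) = (|MST(B)| + |MST(A \ B)|) / |MST(A)|`. -/
noncomputable def mstRatio {V : Type*} (d : V → V → ℝ) (A B : Set V) : ℝ :=
  (mstLength d B + mstLength d (A \ B)) / mstLength d A

/-- The lattice spanned by `u` and `v`. -/
def latticeSet (u v : Pt) : Set Pt := {x | ∃ i j : ℤ, x = i • u + j • v}

/-- The portion `{αu + βv : 0 ≤ α, β ≤ n}` of the lattice spanned by `u` and `v`. -/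
def latticeBox (u v : Pt) (n : ℕ) : Set Pt :=
  {x | ∃ α β : ℕ, α ≤ n ∧ β ≤ n ∧ x = (α : ℝ) • u + (β : ℝ) • v}


open Finset SimpleGraph

section GraphCount

variable {V : Type*} [Fintype V]

lemma my_conn_card_le (G : SimpleGraph V) [Fintype G.edgeSet] (hG : G.Connected) :
    Fintype.card V ≤ G.edgeFinset.card + 1 := by
  classical
  obtain ⟨r⟩ := hG.nonempty
  have key : ∀ v : V, v ≠ r → ∃ x, G.Adj v x ∧ G.dist x r < G.dist v r := by
    intro v hv
    obtain ⟨p, hp⟩ := hG.exists_walk_length_eq_dist v r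
    cases p with
    | nil => exact absurd rfl hv
    | @cons _ x _ h q =>
      refine ⟨x, h, ?_⟩
      have h1 : G.dist x r ≤ q.length := G.dist_le q
      simp only [Walk.length_cons] at hp
      omega
  choose f hf1 hf2 using key
  have hcard : (univ.erase r).card ≤ G.edgeFinset.card := by
    apply Finset.card_le_card_of_injOn
      (fun v => if h : v = r then s(r, r) else s(v, f v h))
    · intro v hv
      have hv' : v ≠ r := Finset.ne_of_mem_erase hv
      simp only [hv', dif_neg, not_false_iff]
      rw [Finset.mem_coe, mem_edgeFinset, mem_edgeSet]
      exact hf1 v hv'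
    · intro a ha b hb hab
      have ha' : a ≠ r := Finset.ne_of_mem_erase ha
      have hb' : b ≠ r := Finset.ne_of_mem_erase hb
      simp only [ha', hb', dif_neg, not_false_iff, Sym2.eq_iff] at hab
      rcases hab with ⟨h1, _⟩ | ⟨h1, h2⟩
      · exact h1
      · exfalso
        have hA := hf2 a ha'
        have hB := hf2 b hb'
        rw [h2] at hA
        rw [← h1] at hB
        omega
  have : (univ.erase r).card = Fintype.card V - 1 := by
    rw [Finset.card_erase_of_mem (mem_univ r), Finset.card_univ]
  have hpos : 1 ≤ Fintype.card V := Fintype.card_pos_iff.mpr ⟨r⟩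
  omega

omit [Fintype V] in
lemma my_reachable_delete {G : SimpleGraph V} {v w : V}
    (h : (G \ fromEdgeSet {s(v, w)}).Reachable v w) {a b : V} (p : G.Walk a b) :
    (G \ fromEdgeSet {s(v, w)}).Reachable a b := by
  induction p with
  | nil => exact Reachable.refl _
  | @cons a c b hadj q ih =>
    refine Reachable.trans ?_ ih
    by_cases he : s(a, c) = s(v, w)
    · rw [Sym2.eq_iff] at he
      rcases he with ⟨rfl, rfl⟩ | ⟨rfl, rfl⟩
      · exact h
      · exact h.symm
    · refine Adj.reachable ?_
      rw [sdiff_adj]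
      refine ⟨hadj, ?_⟩
      rw [fromEdgeSet_adj]
      simp only [Set.mem_singleton_iff]
      tauto

lemma my_isTree_of_connected_card (G : SimpleGraph V) [Fintype G.edgeSet] (hG : G.Connected)
    (hcard : G.edgeFinset.card + 1 ≤ Fintype.card V) : G.IsTree := by
  classical
  refine ⟨hG, ?_⟩
  intro u c hc
  cases c with
  | nil => exact hc.ne_nil rfl
  | @cons _ y _ hadj q =>
    have hmem : s(u, y) ∈ (Walk.cons hadj q).edges := by simp
    have hreach : (G \ fromEdgeSet {s(u, y)}).Reachable u y :=
      (adj_and_reachable_delete_edges_iff_exists_cycle.mpr ⟨u, _, hc, hmem⟩).2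
    set G' := G \ fromEdgeSet {s(u, y)} with hG'
    haveI : Nonempty V := hG.nonempty
    have hG'conn : G'.Connected :=
      Connected.mk fun a b => (hG.preconnected a b).elim fun p => my_reachable_delete hreach p
    have hES : G'.edgeSet = G.edgeSet \ {s(u, y)} := by
      rw [hG', edgeSet_sdiff, edgeSet_fromEdgeSet, edgeSet_sdiff_sdiff_isDiag]
    have hE : G'.edgeFinset = G.edgeFinset.erase s(u, y) := by
      ext e
      rw [mem_edgeFinset, Finset.mem_erase, mem_edgeFinset, hES]
      simp only [Set.mem_diff, Set.mem_singleton_iff]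
      tauto
    have hmemE : s(u, y) ∈ G.edgeFinset := by rwa [mem_edgeFinset, mem_edgeSet]
    have h1 := my_conn_card_le G' hG'conn
    rw [hE, Finset.card_erase_of_mem hmemE] at h1
    have : 1 ≤ G.edgeFinset.card := Finset.card_pos.mpr ⟨_, hmemE⟩
    omega

end GraphCount

section ParentGraph

variable {V : Type*}

/-- The graph connecting each non-root vertex to its parent. -/
def parentGraph (root : V) (parent : V → V) : SimpleGraph V where
  Adj x y := x ≠ y ∧ ((x ≠ root ∧ y = parent x) ∨ (y ≠ root ∧ x = parent y))
  symm := by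
    constructor
    rintro x y ⟨hxy, h⟩
    exact ⟨hxy.symm, h.symm⟩
  loopless := ⟨fun x h => h.1 rfl⟩

variable {root : V} {parent : V → V} {m : V → ℕ}
  (hm : ∀ p, p ≠ root → m (parent p) < m p)

include hm

lemma parentGraph_adj_parent {p : V} (hp : p ≠ root) :
    (parentGraph root parent).Adj p (parent p) := by
  refine ⟨fun h => ?_, Or.inl ⟨hp, rfl⟩⟩
  have := hm p hp
  rw [← h] at this
  omega

lemma parentGraph_connected [Nonempty V] :
    (parentGraph root parent).Connected := by
  have key : ∀ k (p : V), m p ≤ k → (parentGraph root parent).Reachable p root := by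
    intro k
    induction k with
    | zero =>
      intro p hp
      by_cases h : p = root
      · exact h ▸ Reachable.refl _
      · exact absurd (hm p h) (by omega)
    | succ k ih =>
      intro p hp
      by_cases h : p = root
      · exact h ▸ Reachable.refl _
      · have h1 := hm p h
        exact ((parentGraph_adj_parent hm h).reachable).trans (ih (parent p) (by omega))
  exact Connected.mk fun a b =>
    ((key (m a) a le_rfl)).trans (key (m b) b le_rfl).symm

open Finset in
open Classical in
lemma parentGraph_card_edgeFinset [Fintype V] :
    (parentGraph root parent).edgeFinset.card = Fintype.card V - 1 := by
  classical
  have : (univ.erase root).card = (parentGraph root parent).edgeFinset.card := by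
    apply Finset.card_bij (fun p _ => s(p, parent p))
    · intro p hp
      have hp' : p ≠ root := Finset.ne_of_mem_erase hp
      rw [mem_edgeFinset, mem_edgeSet]
      exact parentGraph_adj_parent hm hp'
    · intro a ha b hb hab
      have ha' : a ≠ root := Finset.ne_of_mem_erase ha
      have hb' : b ≠ root := Finset.ne_of_mem_erase hb
      rw [Sym2.eq_iff] at hab
      rcases hab with ⟨h1, _⟩ | ⟨h1, h2⟩
      · exact h1
      · exfalso
        have hA := hm a ha'
        have hB := hm b hb'
        rw [h2] at hA
        rw [← h1] at hB
        omega
    · intro e he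
      rw [mem_edgeFinset] at he
      induction e with
      | _ x y =>
        rw [mem_edgeSet] at he
        obtain ⟨hxy, ⟨hx, rfl⟩ | ⟨hy, rfl⟩⟩ := he
        · exact ⟨x, Finset.mem_erase.mpr ⟨hx, mem_univ x⟩, rfl⟩
        · exact ⟨y, Finset.mem_erase.mpr ⟨hy, mem_univ y⟩, Sym2.eq_swap⟩
  rw [← this, Finset.card_erase_of_mem (mem_univ root), Finset.card_univ]

lemma parentGraph_isTree [Fintype V] [Nonempty V] :
    (parentGraph root parent).IsTree := by
  classical
  refine my_isTree_of_connected_card _ (parentGraph_connected hm) ?_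
  rw [parentGraph_card_edgeFinset hm]
  have : 1 ≤ Fintype.card V := Fintype.card_pos
  omega

open Finset in
open Classical in
lemma parentGraph_weight [Fintype V] (d : V → V → ℝ) (hd : ∀ x y, d x y = d y x) :
    (1 / 2 : ℝ) * ∑ x : V, ∑ y : V,
        (if (parentGraph root parent).Adj x y then d x y else 0)
      = ∑ p : V, (if p = root then 0 else d p (parent p)) := by
  classical
  have excl : ∀ x y : V, (x ≠ root ∧ y = parent x) → (y ≠ root ∧ x = parent y) → False := by
    rintro x y ⟨hx, rfl⟩ ⟨hy, hxy⟩
    have hA := hm x hx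
    have hB := hm (parent x) hy
    rw [← hxy] at hB
    omega
  have hsplit : ∀ x y : V,
      (if (parentGraph root parent).Adj x y then d x y else 0)
        = (if x ≠ root ∧ y = parent x then d x y else 0)
          + (if y ≠ root ∧ x = parent y then d x y else 0) := by
    intro x y
    by_cases h1 : x ≠ root ∧ y = parent x
    · have hne : x ≠ y := by
        intro h
        have h2 := hm x h1.1
        rw [← h1.2, ← h] at h2
        omega
      have hadj : (parentGraph root parent).Adj x y := ⟨hne, Or.inl h1⟩
      rw [if_pos hadj, if_pos h1, if_neg (fun h2 => excl x y h1 h2)]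
      ring
    · by_cases h2 : y ≠ root ∧ x = parent y
      · have hne : x ≠ y := by
          intro h
          have h3 := hm y h2.1
          rw [← h2.2, h] at h3
          omega
        have hadj : (parentGraph root parent).Adj x y := ⟨hne, Or.inr h2⟩
        rw [if_pos hadj, if_neg h1, if_pos h2]
        ring
      · rw [if_neg (fun h : (parentGraph root parent).Adj x y => h.2.elim h1 h2),
          if_neg h1, if_neg h2]
        ring
  have inner1 : ∀ x : V, (∑ y : V, if x ≠ root ∧ y = parent x then d x y else 0)
      = (if x ≠ root then d x (parent x) else 0) := by
    intro x
    by_cases hx : x ≠ root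
    · rw [if_pos hx]
      rw [show (fun y => if x ≠ root ∧ y = parent x then d x y else 0)
          = fun y => if y = parent x then d x y else 0 from
        funext fun y => by by_cases h : y = parent x <;> simp [h, hx]]
      rw [Finset.sum_ite_eq' univ (parent x) (fun y => d x y)]
      simp
    · rw [if_neg hx]
      apply Finset.sum_eq_zero
      intro y _
      rw [if_neg (fun h => hx h.1)]
  have inner2 : ∀ y : V, (∑ x : V, if y ≠ root ∧ x = parent y then d x y else 0)
      = (if y ≠ root then d y (parent y) else 0) := by
    intro y
    by_cases hy : y ≠ root
    · rw [if_pos hy]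
      rw [show (fun x => if y ≠ root ∧ x = parent y then d x y else 0)
          = fun x => if x = parent y then d x y else 0 from
        funext fun x => by by_cases h : x = parent y <;> simp [h, hy]]
      rw [Finset.sum_ite_eq' univ (parent y) (fun x => d x y)]
      simp [hd y (parent y)]
    · rw [if_neg hy]
      apply Finset.sum_eq_zero
      intro x _
      rw [if_neg (fun h => hy h.1)]
  have key : ∑ x : V, ∑ y : V, (if (parentGraph root parent).Adj x y then d x y else 0)
      = 2 * ∑ x : V, (if x ≠ root then d x (parent x) else 0) := by
    calc ∑ x : V, ∑ y : V, (if (parentGraph root parent).Adj x y then d x y else 0)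
        = ∑ x : V, ∑ y : V, ((if x ≠ root ∧ y = parent x then d x y else 0)
          + (if y ≠ root ∧ x = parent y then d x y else 0)) := by
          exact Finset.sum_congr rfl fun x _ => Finset.sum_congr rfl fun y _ => hsplit x y
      _ = (∑ x : V, ∑ y : V, (if x ≠ root ∧ y = parent x then d x y else 0))
          + ∑ x : V, ∑ y : V, (if y ≠ root ∧ x = parent y then d x y else 0) := by
          rw [← Finset.sum_add_distrib]
          exact Finset.sum_congr rfl fun x _ => Finset.sum_add_distrib
      _ = (∑ x : V, (if x ≠ root then d x (parent x) else 0))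
          + ∑ y : V, (if y ≠ root then d y (parent y) else 0) := by
          rw [Finset.sum_comm (s := univ) (t := univ)
            (f := fun x y => if y ≠ root ∧ x = parent y then d x y else 0)]
          exact congrArg₂ (· + ·) (Finset.sum_congr rfl fun x _ => inner1 x)
            (Finset.sum_congr rfl fun y _ => inner2 y)
      _ = 2 * ∑ x : V, (if x ≠ root then d x (parent x) else 0) := by ring
  rw [key]
  rw [show ∑ x : V, (if x ≠ root then d x (parent x) else 0)
      = ∑ p : V, (if p = root then 0 else d p (parent p)) from
    Finset.sum_congr rfl fun x _ => by by_cases hx : x = root <;> simp [hx]]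
  ring

end ParentGraph

section LowerBound

open Finset

variable {V W : Type*}

lemma my_sum_indicator [Fintype V] (G : SimpleGraph V) [DecidableRel G.Adj]
    [Fintype G.edgeSet] :
    ∑ x : V, ∑ y : V, (if G.Adj x y then (1 : ℝ) else 0)
      = 2 * G.edgeFinset.card := by
  classical
  calc ∑ x : V, ∑ y : V, (if G.Adj x y then (1 : ℝ) else 0)
      = ∑ p : V × V, (if G.Adj p.1 p.2 then (1 : ℝ) else 0) := by
        rw [Fintype.sum_prod_type]
    _ = ((univ.filter fun p : V × V => G.Adj p.1 p.2).card : ℝ) := by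
        rw [Finset.sum_boole]
    _ = 2 * G.edgeFinset.card := by
        have h := G.two_mul_card_edgeFinset
        have h2 : (filter (fun x : V × V =>
            match x with | (x, y) => G.Adj x y) univ) = (filter (fun p : V × V => G.Adj p.1 p.2) univ) := rfl
        rw [h2] at h
        have h3 : (@SimpleGraph.edgeFinset V G G.fintypeEdgeSet) = G.edgeFinset := by congr!
        rw [h3] at h
        exact_mod_cast congrArg (Nat.cast : ℕ → ℝ) h.symm

/-- The subgraph of `G` consisting of edges whose endpoints have different colors. -/
def crossGraph (G : SimpleGraph V) (c : V → W) : SimpleGraph V where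
  Adj x y := G.Adj x y ∧ c x ≠ c y
  symm := ⟨fun x y ⟨h1, h2⟩ => ⟨h1.symm, h2.symm⟩⟩
  loopless := ⟨fun x h => G.loopless.irrefl x h.1⟩

/-- The quotient graph on colors. -/
def quotGraph (G : SimpleGraph V) (c : V → W) : SimpleGraph W where
  Adj b b' := b ≠ b' ∧ ∃ x y, G.Adj x y ∧ c x = b ∧ c y = b'
  symm := by
    constructor
    rintro b b' ⟨h, x, y, hxy, hx, hy⟩
    exact ⟨h.symm, y, x, hxy.symm, hy, hx⟩
  loopless := ⟨fun b h => h.1 rfl⟩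

lemma quot_reachable {G : SimpleGraph V} (c : V → W) {x y : V} (h : G.Reachable x y) :
    (quotGraph G c).Reachable (c x) (c y) := by
  obtain ⟨p⟩ := h
  induction p with
  | nil => exact SimpleGraph.Reachable.refl _
  | @cons a a' b hadj q ih =>
    refine SimpleGraph.Reachable.trans ?_ ih
    by_cases hcc : c a = c a'
    · rw [hcc]
    · exact (SimpleGraph.Adj.reachable ⟨hcc, a, a', hadj, rfl, rfl⟩)

lemma quot_connected {G : SimpleGraph V} (hG : G.Connected) {c : V → W}
    (hc : Function.Surjective c) : (quotGraph G c).Connected := by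
  haveI : Nonempty V := hG.nonempty
  haveI : Nonempty W := ⟨c (Classical.arbitrary V)⟩
  refine SimpleGraph.Connected.mk fun b b' => ?_
  obtain ⟨x, rfl⟩ := hc b
  obtain ⟨y, rfl⟩ := hc b'
  exact quot_reachable c (hG.preconnected x y)

open Classical in
lemma cross_card_ge [Fintype V] [Fintype W] (G : SimpleGraph V) (hG : G.Connected)
    (c : V → W) (hc : Function.Surjective c) :
    Fintype.card W ≤ (crossGraph G c).edgeFinset.card + 1 := by
  classical
  have h1 := my_conn_card_le (quotGraph G c) (quot_connected hG hc)
  suffices hle : (quotGraph G c).edgeFinset.card ≤ (crossGraph G c).edgeFinset.card by omega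
  haveI : Nonempty V := hG.nonempty
  have hex : ∀ e ∈ (quotGraph G c).edgeFinset,
      ∃ e', e' ∈ (crossGraph G c).edgeSet ∧ Sym2.map c e' = e := by
    intro e he
    rw [SimpleGraph.mem_edgeFinset] at he
    induction e with
    | _ b b' =>
      rw [SimpleGraph.mem_edgeSet] at he
      obtain ⟨hbb', x, y, hxy, hx, hy⟩ := he
      refine ⟨s(x, y), ?_, by simp [hx, hy]⟩
      rw [SimpleGraph.mem_edgeSet]
      refine ⟨hxy, ?_⟩
      rw [hx, hy]
      exact hbb'
  apply Finset.card_le_card_of_injOn (fun e =>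
    if h : ∃ e', e' ∈ (crossGraph G c).edgeSet ∧ Sym2.map c e' = e then h.choose
    else s(Classical.arbitrary V, Classical.arbitrary V))
  · intro e he
    have h := hex e he
    simp only [dif_pos h]
    exact SimpleGraph.mem_edgeFinset.mpr h.choose_spec.1
  · intro a ha b hb hab
    have hA := hex a (Finset.mem_coe.mp ha)
    have hB := hex b (Finset.mem_coe.mp hb)
    simp only [dif_pos hA, dif_pos hB] at hab
    rw [← hA.choose_spec.2, ← hB.choose_spec.2, hab]

open Classical in
lemma my_weight_lower [Fintype V] (G : SimpleGraph V) (hG : G.IsTree)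
    (d : V → V → ℝ) {n : ℕ} (c : V → Fin (n + 1)) (hc : Function.Surjective c)
    {ν : ℝ} (hν : 1 ≤ ν)
    (h1 : ∀ x y, G.Adj x y → 1 ≤ d x y)
    (h2 : ∀ x y, G.Adj x y → c x ≠ c y → ν ≤ d x y) :
    ((Fintype.card V : ℝ) - 1) + n * (ν - 1) ≤
      (1 / 2) * ∑ x : V, ∑ y : V, (if G.Adj x y then d x y else 0) := by
  classical
  haveI : Nonempty V := hG.isConnected.nonempty
  have hpt : ∀ x y : V,
      (if G.Adj x y then (1 : ℝ) else 0)
        + (ν - 1) * (if (crossGraph G c).Adj x y then (1 : ℝ) else 0)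
      ≤ (if G.Adj x y then d x y else 0) := by
    intro x y
    by_cases hadj : G.Adj x y
    · by_cases hcr : c x ≠ c y
      · have hcross : (crossGraph G c).Adj x y := ⟨hadj, hcr⟩
        rw [if_pos hadj, if_pos hadj, if_pos hcross]
        have := h2 x y hadj hcr
        linarith
      · have hncross : ¬(crossGraph G c).Adj x y := fun h => hcr h.2
        rw [if_pos hadj, if_pos hadj, if_neg hncross]
        have := h1 x y hadj
        linarith
    · have hncross : ¬(crossGraph G c).Adj x y := fun h => hadj h.1
      rw [if_neg hadj, if_neg hadj, if_neg hncross]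
      simp
  have hsum : ∑ x : V, ∑ y : V,
      ((if G.Adj x y then (1 : ℝ) else 0)
        + (ν - 1) * (if (crossGraph G c).Adj x y then (1 : ℝ) else 0))
      ≤ ∑ x : V, ∑ y : V, (if G.Adj x y then d x y else 0) :=
    Finset.sum_le_sum fun x _ => Finset.sum_le_sum fun y _ => hpt x y
  have hsplit : ∑ x : V, ∑ y : V,
      ((if G.Adj x y then (1 : ℝ) else 0)
        + (ν - 1) * (if (crossGraph G c).Adj x y then (1 : ℝ) else 0))
      = 2 * G.edgeFinset.card + (ν - 1) * (2 * (crossGraph G c).edgeFinset.card) := by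
    rw [Finset.sum_congr rfl fun x _ => Finset.sum_add_distrib]
    rw [Finset.sum_add_distrib]
    rw [my_sum_indicator G]
    congr 1
    rw [Finset.sum_congr rfl fun x _ => (Finset.mul_sum _ _ _).symm]
    rw [← Finset.mul_sum]
    rw [my_sum_indicator (crossGraph G c)]
  have hcardE : (G.edgeFinset.card : ℝ) = (Fintype.card V : ℝ) - 1 := by
    have := hG.card_edgeFinset
    have hpos : 1 ≤ Fintype.card V := Fintype.card_pos
    push_cast [← this]
    ring
  have hcross : (n : ℝ) ≤ ((crossGraph G c).edgeFinset.card : ℝ) := by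
    have := cross_card_ge G hG.isConnected c hc
    rw [Fintype.card_fin] at this
    exact_mod_cast by omega
  rw [hsplit] at hsum
  rw [hcardE] at hsum
  have : (ν - 1) * (2 * (n : ℝ)) ≤ (ν - 1) * (2 * ((crossGraph G c).edgeFinset.card : ℝ)) := by
    apply mul_le_mul_of_nonneg_left _ (by linarith)
    linarith
  linarith

end LowerBound

/-- Let `L = L(u,v)` with `‖u‖ = 1 ≤ ν = ‖v‖`, `‖x‖ ≥ 1` for every nonzero `x ∈ L` and
`‖x‖ ≥ ν` for every `x ∈ L` not in `ℤu`.  Then for every positive `n`, the `(n+1)²` points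
`L_n = {αu + βv : 0 ≤ α, β ≤ n}` have a minimum spanning tree of length exactly
`(n+1)n + nν`. -/
theorem lattice_box_mst_length (u v : Pt) (ν : ℝ)
    (hli : LinearIndependent ℝ ![u, v])
    (hu : ‖u‖ = 1) (hv : ‖v‖ = ν) (hν : 1 ≤ ν)
    (hushort : ∀ x ∈ latticeSet u v, x ≠ 0 → 1 ≤ ‖x‖)
    (hvshort : ∀ x ∈ latticeSet u v, (∀ i : ℤ, x ≠ i • u) → ν ≤ ‖x‖) :
    ∀ n : ℕ, 0 < n →
      mstLength dist (latticeBox u v n) = ((n : ℝ) + 1) * n + n * ν := by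
  intro n hn
  classical
  have pairli := LinearIndependent.pair_iff.mp hli
  set pt : Fin (n+1) × Fin (n+1) → Pt :=
    fun p => ((p.1 : ℕ) : ℝ) • u + ((p.2 : ℕ) : ℝ) • v with hpt
  -- differences of box points are lattice points
  have hdiff_mem : ∀ p q : Fin (n+1) × Fin (n+1), pt p - pt q ∈ latticeSet u v := by
    intro p q
    refine ⟨((p.1 : ℕ) : ℤ) - ((q.1 : ℕ) : ℤ), ((p.2 : ℕ) : ℤ) - ((q.2 : ℕ) : ℤ), ?_⟩
    rw [← Int.cast_smul_eq_zsmul ℝ, ← Int.cast_smul_eq_zsmul ℝ]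
    push_cast
    simp only [hpt]
    module
  have hptinj : Function.Injective pt := by
    intro p q h
    have h0 : (((p.1 : ℕ) : ℝ) - ((q.1 : ℕ) : ℝ)) • u
        + ((((p.2 : ℕ) : ℝ)) - (((q.2 : ℕ) : ℝ))) • v = 0 := by
      simp only [hpt] at h
      rw [sub_smul, sub_smul]
      rw [sub_add_sub_comm, h, sub_self]
    obtain ⟨h1, h2⟩ := pairli _ _ h0
    have e1 : (p.1 : ℕ) = (q.1 : ℕ) := by
      have := sub_eq_zero.mp h1; exact_mod_cast this
    have e2 : (p.2 : ℕ) = (q.2 : ℕ) := by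
      have := sub_eq_zero.mp h2; exact_mod_cast this
    exact Prod.ext (Fin.ext e1) (Fin.ext e2)
  have hdist1 : ∀ p q : Fin (n+1) × Fin (n+1), p ≠ q → 1 ≤ dist (pt p) (pt q) := by
    intro p q hne
    rw [dist_eq_norm]
    refine hushort _ (hdiff_mem p q) ?_
    intro h0
    exact hne (hptinj (sub_eq_zero.mp h0))
  have hdistv : ∀ p q : Fin (n+1) × Fin (n+1), p.2 ≠ q.2 → ν ≤ dist (pt p) (pt q) := by
    intro p q hne
    rw [dist_eq_norm]
    refine hvshort _ (hdiff_mem p q) ?_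
    intro i hi
    have h0 : ((((p.1 : ℕ) : ℤ) - ((q.1 : ℕ) : ℤ) - i : ℤ) : ℝ) • u
        + ((((p.2 : ℕ) : ℤ) - ((q.2 : ℕ) : ℤ) : ℤ) : ℝ) • v = 0 := by
      have hi' : pt p - pt q = (i : ℝ) • u := by
        rw [hi, Int.cast_smul_eq_zsmul]
      push_cast
      simp only [hpt] at hi' ⊢
      linear_combination (norm := module) hi'
    obtain ⟨-, h2⟩ := pairli _ _ h0
    have h2' : ((p.2 : ℕ) : ℤ) - ((q.2 : ℕ) : ℤ) = 0 := by exact_mod_cast h2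
    have h2'' := sub_eq_zero.mp h2'
    have e2 : (p.2 : ℕ) = (q.2 : ℕ) := by exact_mod_cast h2''
    exact hne (Fin.ext e2)
  -- the box is the range of pt
  have hrange : latticeBox u v n = Set.range pt := by
    ext x
    constructor
    · rintro ⟨α, β, hα, hβ, rfl⟩
      refine ⟨(⟨α, by omega⟩, ⟨β, by omega⟩), rfl⟩
    · rintro ⟨p, rfl⟩
      exact ⟨p.1, p.2, by have := p.1.isLt; omega, by have := p.2.isLt; omega, rfl⟩
  have hfin : (latticeBox u v n).Finite := by
    rw [hrange]; exact Set.finite_range pt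
  set T : Finset Pt := hfin.toFinset with hT
  have hmemT : ∀ p, pt p ∈ T := by
    intro p
    rw [hT, Set.Finite.mem_toFinset, hrange]
    exact Set.mem_range_self p
  let eqv : (Fin (n+1) × Fin (n+1)) ≃ {x // x ∈ T} :=
    Equiv.ofBijective (fun p => ⟨pt p, hmemT p⟩)
      ⟨fun p q h => hptinj (congrArg Subtype.val h), by
        rintro ⟨x, hx⟩
        rw [hT, Set.Finite.mem_toFinset, hrange] at hx
        obtain ⟨p, hp⟩ := hx
        exact ⟨p, Subtype.ext hp⟩⟩
  have heqv1 : ∀ p, (eqv p : Pt) = pt p := fun p => rfl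
  have hcardJ : Fintype.card {x // x ∈ T} = (n+1) * (n+1) := by
    rw [← Fintype.card_congr eqv]
    simp
  -- root, parent, measure
  set rootI : Fin (n+1) × Fin (n+1) := (0, 0) with hrootI
  set parentI : Fin (n+1) × Fin (n+1) → Fin (n+1) × Fin (n+1) := fun p =>
    if (p.1 : ℕ) ≠ 0 then (⟨(p.1 : ℕ) - 1, by have := p.1.isLt; omega⟩, p.2)
    else (p.1, ⟨(p.2 : ℕ) - 1, by have := p.2.isLt; omega⟩) with hparentI
  set mI : Fin (n+1) × Fin (n+1) → ℕ := fun p => (p.1 : ℕ) + (p.2 : ℕ) with hmI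
  have hne_root : ∀ p : Fin (n+1) × Fin (n+1), p ≠ rootI →
      ((p.1 : ℕ) ≠ 0 ∨ ((p.1 : ℕ) = 0 ∧ (p.2 : ℕ) ≠ 0)) := by
    intro p hp
    by_cases h1 : (p.1 : ℕ) = 0
    · refine Or.inr ⟨h1, fun h2 => hp ?_⟩
      exact Prod.ext (Fin.ext h1) (Fin.ext h2)
    · exact Or.inl h1
  have hmIlt : ∀ p, p ≠ rootI → mI (parentI p) < mI p := by
    intro p hp
    rcases hne_root p hp with h | ⟨h1, h2⟩
    · simp only [hparentI, hmI, if_pos h]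
      omega
    · simp only [hparentI, hmI, h1, if_neg (by omega : ¬ (p.1 : ℕ) ≠ 0)]
      omega
  -- transfer to the subtype
  set rootJ : {x // x ∈ T} := eqv rootI with hrootJ
  set parentJ : {x // x ∈ T} → {x // x ∈ T} := fun x => eqv (parentI (eqv.symm x))
    with hparentJ
  set mJ : {x // x ∈ T} → ℕ := fun x => mI (eqv.symm x) with hmJdef
  have hmJ : ∀ x, x ≠ rootJ → mJ (parentJ x) < mJ x := by
    intro x hx
    have hx' : eqv.symm x ≠ rootI := by
      intro h
      apply hx
      rw [hrootJ, ← h, Equiv.apply_symm_apply]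
    simp only [hmJdef, hparentJ, Equiv.symm_apply_apply]
    exact hmIlt _ hx'
  haveI : Nonempty {x // x ∈ T} := ⟨rootJ⟩
  have htree : (parentGraph rootJ parentJ).IsTree := parentGraph_isTree hmJ
  -- distance from a point to its parent
  have hdistpar : ∀ p : Fin (n+1) × Fin (n+1), p ≠ rootI →
      dist (pt p) (pt (parentI p)) = if (p.1 : ℕ) ≠ 0 then 1 else ν := by
    intro p hp
    rcases hne_root p hp with h | ⟨h1, h2⟩
    · rw [if_pos h]
      have hdiff : pt p - pt (parentI p) = u := by
        simp only [hparentI, if_pos h, hpt]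
        have : (((p.1 : ℕ) - 1 : ℕ) : ℝ) = ((p.1 : ℕ) : ℝ) - 1 := by
          have : 1 ≤ (p.1 : ℕ) := by omega
          push_cast [this]
          ring
        rw [this]
        module
      rw [dist_eq_norm, hdiff, hu]
    · rw [if_neg (by omega : ¬ (p.1 : ℕ) ≠ 0)]
      have hdiff : pt p - pt (parentI p) = v := by
        simp only [hparentI, if_neg (by omega : ¬ (p.1 : ℕ) ≠ 0), hpt]
        have : (((p.2 : ℕ) - 1 : ℕ) : ℝ) = ((p.2 : ℕ) : ℝ) - 1 := by
          have : 1 ≤ (p.2 : ℕ) := by omega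
          push_cast [this]
          ring
        rw [this]
        module
      rw [dist_eq_norm, hdiff, hv]
  -- the weight of the comb tree
  have hcombW : treeWeight dist T (parentGraph rootJ parentJ) = ((n : ℝ) + 1) * n + n * ν := by
    have hw := parentGraph_weight hmJ (fun x y : {x // x ∈ T} => dist (x : Pt) (y : Pt))
      (fun x y => dist_comm _ _)
    rw [treeWeight]
    simp only [hw]
    have h1 : (∑ p : {x // x ∈ T},
        (if p = rootJ then (0 : ℝ) else dist (p : Pt) ((parentJ p : {x // x ∈ T}) : Pt)))
        = ((n : ℝ) + 1) * n + n * ν := by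
      have htrans : (∑ p : {x // x ∈ T},
          (if p = rootJ then (0 : ℝ) else dist (p : Pt) ((parentJ p : {x // x ∈ T}) : Pt)))
          = ∑ p : Fin (n+1) × Fin (n+1),
            (if p = rootI then (0 : ℝ) else (if (p.1 : ℕ) ≠ 0 then (1 : ℝ) else ν)) := by
        refine (Fintype.sum_equiv eqv _ _ ?_).symm
        intro p
        by_cases hp : p = rootI
        · rw [if_pos hp, if_pos (by rw [hp, hrootJ])]
        · have hne : ¬ (eqv p = rootJ) := fun h => hp (eqv.injective (h.trans hrootJ))
          rw [if_neg hp, if_neg hne]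
          rw [← hdistpar p hp]
          simp only [hparentJ, Equiv.symm_apply_apply]
          rfl
      rw [htrans]
      have hsub : ∀ p : Fin (n+1) × Fin (n+1),
          (if p = rootI then (0 : ℝ) else (if (p.1 : ℕ) ≠ 0 then (1 : ℝ) else ν))
          = (if (p.1 : ℕ) ≠ 0 then (1 : ℝ) else ν)
            - (if p = rootI then (if (p.1 : ℕ) ≠ 0 then (1 : ℝ) else ν) else 0) := by
        intro p
        by_cases hp : p = rootI <;> simp [hp]
      rw [Finset.sum_congr rfl fun p _ => hsub p, Finset.sum_sub_distrib,
        Finset.sum_ite_eq' Finset.univ rootI]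
      have hroot0 : ((rootI.1 : ℕ)) = 0 := by simp [hrootI]
      rw [if_pos (Finset.mem_univ rootI)]
      rw [if_neg (by simp [hroot0])]
      rw [Fintype.sum_prod_type]
      have step3 : ∑ a : Fin (n+1), ∑ _b : Fin (n+1), (if (a : ℕ) ≠ 0 then (1 : ℝ) else ν)
          = ∑ a : Fin (n+1), ((n : ℝ) + 1) * (if (a : ℕ) ≠ 0 then (1 : ℝ) else ν) := by
        refine Finset.sum_congr rfl fun a _ => ?_
        rw [Finset.sum_const, Finset.card_univ, Fintype.card_fin, nsmul_eq_mul]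
        push_cast
        ring
      rw [step3, ← Finset.mul_sum]
      have step4 : ∑ a : Fin (n+1), (if (a : ℕ) ≠ 0 then (1 : ℝ) else ν) = (n : ℝ) + ν := by
        rw [Fin.sum_univ_succ]
        have h0 : (if ((0 : Fin (n+1)) : ℕ) ≠ 0 then (1 : ℝ) else ν) = ν := by
          rw [if_neg (by simp)]
        have hs : ∀ i : Fin n, (if ((i.succ : Fin (n+1)) : ℕ) ≠ 0 then (1 : ℝ) else ν)
            = 1 := by
          intro i
          rw [if_pos (by simp [Fin.val_succ])]
        rw [h0, Finset.sum_congr rfl fun i _ => hs i]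
        rw [Finset.sum_const, Finset.card_univ, Fintype.card_fin, nsmul_eq_mul]
        ring
      rw [step4]
      ring
    refine Eq.trans ?_ h1
    congr!
  -- main computation
  rw [mstLength, dif_pos hfin, mstLengthF]
  apply IsLeast.csInf_eq
  constructor
  · exact ⟨parentGraph rootJ parentJ, htree, hcombW.symm⟩
  · rintro L ⟨G, hGtree, rfl⟩
    have hc : Function.Surjective (fun x : {x // x ∈ T} => (eqv.symm x).2) := by
      intro b
      exact ⟨eqv (0, b), by simp⟩
    have hlow := my_weight_lower G hGtree (fun x y => dist (x : Pt) (y : Pt))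
      (fun x : {x // x ∈ T} => (eqv.symm x).2) hc hν ?_ ?_
    · rw [treeWeight]
      refine le_trans (le_of_eq ?_) hlow
      rw [hcardJ]
      push_cast
      ring
    · intro x y hadj
      have hxy : eqv.symm x ≠ eqv.symm y := fun h => hadj.ne (by
        rw [← eqv.apply_symm_apply x, ← eqv.apply_symm_apply y, h])
      have := hdist1 _ _ hxy
      rwa [← heqv1, ← heqv1, eqv.apply_symm_apply, eqv.apply_symm_apply] at this
    · intro x y hadj hne
      have := hdistv _ _ hne
      rwa [← heqv1, ← heqv1, eqv.apply_symm_apply, eqv.apply_symm_apply] at this
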